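/- The principal specialization of the Schur polynomial of the complement-conjugate diagram satisfies s_{λ̄'}(1,q,...,q^{k-1}) = q^{||λ̄'||} · Π_{1≤i<j≤n}[a_i - a_j]_q · Π_{l=1}^n [n+k-l]_q! / ([a_l]_q! [n+k-1-a_l]_q!), where a_i = λ_i + n - i. -/

import Mathlib

/-- q-integer `[m]_q = (1-q^m)/(1-q)`. -/
noncomputable def qnum (q : ℝ) (m : ℕ) : ℝ := (1 - q ^ m) / (1 - q)

/-- q-factorial `[m]_q!`. -/
noncomputable def qfact (q : ℝ) (m : ℕ) : ℝ := ∏ j ∈ Finset.range m, qnum q (j + 1)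

/-- Schur polynomial (bialternant formula). -/
noncomputable def schur (n : ℕ) (lam : Fin n → ℕ) (x : Fin n → ℝ) : ℝ :=
  Matrix.det (Matrix.of fun i j : Fin n => x j ^ (lam i + (n - 1 - (i : ℕ)))) /
    Matrix.det (Matrix.of fun i j : Fin n => x j ^ (n - 1 - (i : ℕ)))

/-- Conjugate partition: `λ'_j = #{i : λ_i > j}` (0-indexed `j`). -/
noncomputable def conj (n k : ℕ) (lam : Fin n → ℕ) (j : Fin k) : ℕ :=
  (Finset.univ.filter (fun i : Fin n => (j : ℕ) < lam i)).card

namespace Stmt17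
open Finset

lemma sum_range_id_add (a b : ℕ) :
    ∑ j ∈ range (a + b), j = (∑ j ∈ range a, j) + (∑ j ∈ range b, j) + a * b := by
  induction b with
  | zero => simp
  | succ b ih =>
      rw [← Nat.add_assoc, Finset.sum_range_succ, Finset.sum_range_succ, ih, Nat.mul_succ]
      omega

lemma choose_two (m : ℕ) : m.choose 2 = ∑ j ∈ range m, j := by
  induction m with
  | zero => simp
  | succ m ih =>
      rw [Finset.sum_range_succ, ← ih]
      show (m + 1).choose 2 = _
      rw [Nat.choose_succ_succ]
      simp [Nat.choose_one_right]
      omega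

lemma prod_Ioi_eq_pairs {m : ℕ} (f : Fin m → Fin m → ℝ) :
    ∏ i : Fin m, ∏ j ∈ Ioi i, f i j
      = ∏ p ∈ univ.filter (fun p : Fin m × Fin m => p.1 < p.2), f p.1 p.2 := by
  rw [Finset.prod_sigma']
  refine Finset.prod_nbij' (fun p => (p.1, p.2)) (fun p => ⟨p.1, p.2⟩) ?_ ?_ ?_ ?_ ?_ <;>
    simp [Finset.mem_sigma, Finset.mem_filter, Finset.mem_Ioi]

lemma pairs_image {m : ℕ} (E : Fin m → ℕ) (hE : ∀ i j : Fin m, i < j → E j < E i)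
    (g : ℕ → ℕ → ℝ) :
    ∏ p ∈ univ.filter (fun p : Fin m × Fin m => p.1 < p.2), g (E p.2) (E p.1)
      = ∏ p ∈ ((image E univ) ×ˢ (image E univ)).filter (fun p => p.1 < p.2), g p.1 p.2 := by
  refine Finset.prod_bij (fun p _ => (E p.2, E p.1)) ?_ ?_ ?_ ?_
  · intro p hp
    simp only [Finset.mem_filter, Finset.mem_univ, true_and] at hp
    simp only [Finset.mem_filter, Finset.mem_product, Finset.mem_image]
    exact ⟨⟨⟨p.2, mem_univ _, rfl⟩, ⟨p.1, mem_univ _, rfl⟩⟩, hE p.1 p.2 hp⟩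
  · intro p hp p' hp' h
    simp only [Finset.mem_filter] at hp hp'
    have h2 : E p.2 = E p'.2 := congrArg Prod.fst h
    have h1 : E p.1 = E p'.1 := congrArg Prod.snd h
    have hinj : ∀ i j : Fin m, E i = E j → i = j := by
      intro i j hij
      rcases lt_trichotomy i j with h' | h' | h'
      · exact absurd hij (by have := hE i j h'; omega)
      · exact h'
      · exact absurd hij (by have := hE j i h'; omega)
    exact Prod.ext (hinj _ _ h1) (hinj _ _ h2)
  · intro b hb
    simp only [Finset.mem_filter, Finset.mem_product, Finset.mem_image] at hb
    obtain ⟨⟨⟨u, _, hu⟩, ⟨v, _, hv⟩⟩, hlt⟩ := hb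
    have hvu : v < u := by
      rcases lt_trichotomy v u with h' | h' | h'
      · exact h'
      · exfalso; subst h'; omega
      · exfalso; have := hE u v h'; omega
    refine ⟨(v, u), by simpa using hvu, by simp [hu, hv]⟩
  · intro p hp; rfl


noncomputable def gg (q : ℝ) (x y : ℕ) : ℝ := q ^ x - q ^ y
noncomputable def gg' (q : ℝ) (x y : ℕ) : ℝ := if x < y then gg q x y else gg q y x
noncomputable def PP (q : ℝ) (S : Finset ℕ) : ℝ :=
  ∏ p ∈ (S ×ˢ S).filter (fun p => p.1 < p.2), gg q p.1 p.2

lemma gg'_symm (q : ℝ) (x y : ℕ) : gg' q x y = gg' q y x := by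
  unfold gg'
  rcases lt_trichotomy x y with h | h | h
  · rw [if_pos h, if_neg (by omega)]
  · subst h; rfl
  · rw [if_neg (by omega), if_pos h]

lemma PP_union (q : ℝ) (S T : Finset ℕ) (hd : Disjoint S T) :
    PP q (S ∪ T) = PP q S * PP q T * ∏ x ∈ S, ∏ y ∈ T, gg' q x y := by
  classical
  have hST : ∀ x, x ∈ S → x ∈ T → False := fun x hS hT => Finset.disjoint_left.mp hd hS hT
  have hsplit : (S ∪ T) ×ˢ (S ∪ T) = (S ×ˢ S ∪ T ×ˢ T) ∪ (S ×ˢ T ∪ T ×ˢ S) := by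
    rw [Finset.union_product, Finset.product_union, Finset.product_union]
    ext p; simp only [Finset.mem_union]; tauto
  have hd1 : Disjoint ((S ×ˢ S ∪ T ×ˢ T).filter (fun p : ℕ × ℕ => p.1 < p.2))
      (((S ×ˢ T ∪ T ×ˢ S)).filter (fun p : ℕ × ℕ => p.1 < p.2)) := by
    rw [Finset.disjoint_left]
    intro p hp hp'
    simp only [Finset.mem_filter, Finset.mem_union, Finset.mem_product] at hp hp'
    rcases hp.1 with ⟨h1, h2⟩ | ⟨h1, h2⟩ <;> rcases hp'.1 with ⟨h1', h2'⟩ | ⟨h1', h2'⟩ <;>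
      [exact hST _ h2 h2'; exact hST _ h1 h1'; exact hST _ h1' h1; exact hST _ h2' h2]
  have hd2 : Disjoint ((S ×ˢ S).filter (fun p : ℕ × ℕ => p.1 < p.2))
      ((T ×ˢ T).filter (fun p : ℕ × ℕ => p.1 < p.2)) := by
    rw [Finset.disjoint_left]
    intro p hp hp'
    simp only [Finset.mem_filter, Finset.mem_product] at hp hp'
    exact hST _ hp.1.1 hp'.1.1
  have hd3 : Disjoint ((S ×ˢ T).filter (fun p : ℕ × ℕ => p.1 < p.2))
      ((T ×ˢ S).filter (fun p : ℕ × ℕ => p.1 < p.2)) := by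
    rw [Finset.disjoint_left]
    intro p hp hp'
    simp only [Finset.mem_filter, Finset.mem_product] at hp hp'
    exact hST _ hp.1.1 hp'.1.1
  unfold PP
  rw [hsplit, Finset.filter_union, Finset.prod_union hd1, Finset.filter_union,
    Finset.prod_union hd2, Finset.filter_union, Finset.prod_union hd3]
  congr 1
  -- mixed part
  have e1 : ∏ p ∈ (T ×ˢ S).filter (fun p : ℕ × ℕ => p.1 < p.2), gg q p.1 p.2
      = ∏ p ∈ (S ×ˢ T).filter (fun p : ℕ × ℕ => p.2 < p.1), gg q p.2 p.1 := by
    refine Finset.prod_nbij' (fun p => (p.2, p.1)) (fun p => (p.2, p.1)) ?_ ?_ ?_ ?_ ?_ <;>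
      simp +contextual [Finset.mem_filter, Finset.mem_product]
  have e2 : (S ×ˢ T).filter (fun p : ℕ × ℕ => p.2 < p.1)
      = (S ×ˢ T).filter (fun p : ℕ × ℕ => ¬ p.1 < p.2) := by
    refine Finset.filter_congr ?_
    intro p hp
    simp only [Finset.mem_product] at hp
    have : p.1 ≠ p.2 := fun h => hST p.1 hp.1 (h ▸ hp.2)
    constructor <;> intro <;> omega
  rw [e1, e2, ← Finset.prod_product' S T (fun x y => gg' q x y),
    ← Finset.prod_filter_mul_prod_filter_not (S ×ˢ T) (fun p => p.1 < p.2)]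
  congr 1
  · exact Finset.prod_congr rfl fun p hp => by
      simp only [Finset.mem_filter] at hp
      simp [gg', if_pos hp.2]
  · exact Finset.prod_congr rfl fun p hp => by
      simp only [Finset.mem_filter] at hp
      simp [gg', if_neg hp.2]

lemma PP_range_succ (q : ℝ) (m : ℕ) :
    PP q (range (m + 1)) = PP q (range m) * ∏ y ∈ range m, gg q y m := by
  have h1 : range (m + 1) = range m ∪ {m} := by ext x; simp; omega
  have hd : Disjoint (range m) ({m} : Finset ℕ) := by simp
  rw [h1, PP_union q _ _ hd]
  have h2 : PP q ({m} : Finset ℕ) = 1 := by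
    unfold PP
    rw [Finset.singleton_product_singleton, Finset.filter_singleton]
    simp
  rw [h2, mul_one]
  congr 1
  refine Finset.prod_congr rfl fun x hx => ?_
  simp only [Finset.mem_range] at hx
  simp [gg', if_pos hx]

lemma PP_range_split (q : ℝ) (k n : ℕ) :
    PP q (range (n + k)) = PP q (range k) *
      ∏ l ∈ range n, ∏ y ∈ range (k + l), gg q y (k + l) := by
  induction n with
  | zero => simp
  | succ n ih =>
      have : n + 1 + k = (n + k) + 1 := by omega
      rw [this, PP_range_succ, ih, Finset.prod_range_succ]
      have : k + n = n + k := by omega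
      rw [this, mul_assoc]

lemma col_eval (q : ℝ) (hq1 : q < 1) (m : ℕ) :
    ∏ y ∈ range m, gg q y m
      = q ^ (∑ j ∈ range m, j) * (1 - q) ^ m * qfact q m := by
  have h1q : (1 : ℝ) - q ≠ 0 := by intro h; nlinarith
  rw [← Finset.prod_range_reflect (fun y => gg q y m) m]
  have : ∀ j ∈ range m, gg q (m - 1 - j) m
      = q ^ (m - 1 - j) * ((1 - q) * qnum q (j + 1)) := by
    intro j hj
    simp only [Finset.mem_range] at hj
    unfold gg qnum
    rw [mul_div_cancel₀ _ h1q]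
    have hm : m = (m - 1 - j) + (j + 1) := by omega
    rw [mul_sub, mul_one, ← pow_add, ← hm]
  rw [Finset.prod_congr rfl this, Finset.prod_mul_distrib, Finset.prod_mul_distrib,
    Finset.prod_pow_eq_pow_sum, Finset.sum_range_reflect (fun j => j) m,
    Finset.prod_const, Finset.card_range]
  unfold qfact; ring

lemma num_eval (q : ℝ) (hq1 : q < 1) (N x : ℕ) (hx : x < N) :
    ∏ y ∈ (range N).erase x, gg' q x y
      = q ^ ((∑ j ∈ range x, j) + x * (N - 1 - x)) * (1 - q) ^ (N - 1) *
        (qfact q x * qfact q (N - 1 - x)) := by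
  have h1q : (1 : ℝ) - q ≠ 0 := by intro h; nlinarith
  have hsplit : (range N).erase x = range x ∪ Ico (x + 1) N := by
    ext y; simp [Finset.mem_erase, Finset.mem_Ico]; omega
  have hd : Disjoint (range x) (Ico (x + 1) N) := by
    rw [Finset.disjoint_left]; intro y hy hy'
    simp only [Finset.mem_range] at hy
    simp only [Finset.mem_Ico] at hy'
    omega
  rw [hsplit, Finset.prod_union hd]
  have e1 : ∏ y ∈ range x, gg' q x y = ∏ y ∈ range x, gg q y x := by
    refine Finset.prod_congr rfl fun y hy => ?_
    simp only [Finset.mem_range] at hy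
    simp [gg', if_neg (by omega : ¬ x < y), gg]
  have e2 : ∏ y ∈ Ico (x + 1) N, gg' q x y
      = q ^ (x * (N - 1 - x)) * (1 - q) ^ (N - 1 - x) * qfact q (N - 1 - x) := by
    rw [Finset.prod_Ico_eq_prod_range]
    have hNx : N - (x + 1) = N - 1 - x := by omega
    have : ∀ t ∈ range (N - 1 - x), gg' q x (x + 1 + t)
        = q ^ x * ((1 - q) * qnum q (t + 1)) := by
      intro t ht
      have hlt : x < x + 1 + t := by omega
      unfold gg' gg qnum
      rw [if_pos hlt, mul_div_cancel₀ _ h1q]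
      have : x + 1 + t = x + (t + 1) := by omega
      rw [this, pow_add, mul_sub, mul_one]
    rw [hNx, Finset.prod_congr rfl this, Finset.prod_mul_distrib, Finset.prod_mul_distrib,
      Finset.prod_const, Finset.prod_const, Finset.card_range, ← pow_mul]
    unfold qfact; ring
  rw [e1, col_eval q hq1 x, e2]
  have hpow : (1 - q) ^ x * (1 - q) ^ (N - 1 - x) = (1 - q) ^ (N - 1) := by
    rw [← pow_add]; congr 1; omega
  rw [pow_add q (∑ j ∈ range x, j) (x * (N - 1 - x)), ← hpow]
  ring


lemma erase_sq (q : ℝ) (S : Finset ℕ) :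
    ∏ x ∈ S, ∏ y ∈ S.erase x, gg' q x y = PP q S ^ 2 := by
  classical
  have e0 : ∏ x ∈ S, ∏ y ∈ S.erase x, gg' q x y
      = ∏ p ∈ (S ×ˢ S).filter (fun p => p.1 ≠ p.2), gg' q p.1 p.2 := by
    rw [Finset.prod_sigma' S (fun x => S.erase x) (fun x y => gg' q x y)]
    refine Finset.prod_nbij' (fun p => (p.1, p.2)) (fun p => ⟨p.1, p.2⟩) ?_ ?_ ?_ ?_ ?_ <;>
      simp +contextual [Finset.mem_sigma, Finset.mem_erase, eq_comm]
  rw [e0, ← Finset.prod_filter_mul_prod_filter_not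
    ((S ×ˢ S).filter (fun p => p.1 ≠ p.2)) (fun p => p.1 < p.2), Finset.filter_filter,
    Finset.filter_filter]
  have h1 : (S ×ˢ S).filter (fun p : ℕ × ℕ => p.1 ≠ p.2 ∧ p.1 < p.2)
      = (S ×ˢ S).filter (fun p : ℕ × ℕ => p.1 < p.2) :=
    Finset.filter_congr (by intro p hp; constructor <;> intro h' <;> [exact h'.2; omega])
  have h2 : (S ×ˢ S).filter (fun p : ℕ × ℕ => p.1 ≠ p.2 ∧ ¬ p.1 < p.2)
      = (S ×ˢ S).filter (fun p : ℕ × ℕ => p.2 < p.1) :=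
    Finset.filter_congr (by intro p hp; constructor <;> intro h' <;> omega)
  have h3 : ∏ p ∈ (S ×ˢ S).filter (fun p : ℕ × ℕ => p.1 < p.2), gg' q p.1 p.2 = PP q S :=
    Finset.prod_congr rfl fun p hp => by
      simp only [Finset.mem_filter] at hp
      simp [gg', if_pos hp.2]
  have h4 : ∏ p ∈ (S ×ˢ S).filter (fun p : ℕ × ℕ => p.2 < p.1), gg' q p.1 p.2 = PP q S := by
    have : ∏ p ∈ (S ×ˢ S).filter (fun p : ℕ × ℕ => p.2 < p.1), gg' q p.1 p.2
        = ∏ p ∈ (S ×ˢ S).filter (fun p : ℕ × ℕ => p.1 < p.2), gg' q p.1 p.2 := by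
      refine Finset.prod_nbij' (fun p => (p.2, p.1)) (fun p => (p.2, p.1)) ?_ ?_ ?_ ?_ ?_ <;>
        simp +contextual [Finset.mem_filter, Finset.mem_product, gg'_symm]
    rw [this, h3]
  rw [h1, h2, h3, h4, sq]

lemma sum_pairs_snd {n : ℕ} (f : Fin n → ℕ) :
    ∑ p ∈ univ.filter (fun p : Fin n × Fin n => p.1 < p.2), f p.2
      = ∑ j : Fin n, (j : ℕ) * f j := by
  have e1 : ∀ j : Fin n, (j : ℕ) * f j = ∑ i ∈ range (j : ℕ), f j := by
    intro j; rw [Finset.sum_const, Finset.card_range, smul_eq_mul]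
  rw [Finset.sum_congr rfl (fun j _ => e1 j),
    Finset.sum_sigma' univ (fun j : Fin n => range (j : ℕ)) (fun j _ => f j)]
  refine Finset.sum_bij (fun (p : Fin n × Fin n) _ => (⟨p.2, (p.1 : ℕ)⟩ : Σ _ : Fin n, ℕ))
    ?_ ?_ ?_ ?_
  · intro p hp
    simp only [Finset.mem_filter, Finset.mem_univ, true_and] at hp
    simp only [Finset.mem_sigma, Finset.mem_univ, Finset.mem_range, true_and]
    exact hp
  · intro p hp p' hp' h
    have h1 : p.2 = p'.2 := congrArg Sigma.fst h
    have h2 : (p.1 : ℕ) = (p'.1 : ℕ) := by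
      have := congrArg Sigma.snd h
      simpa using this
    exact Prod.ext (Fin.ext h2) h1
  · intro x hx
    simp only [Finset.mem_sigma, Finset.mem_univ, Finset.mem_range, true_and] at hx
    have hx2 : x.2 < n := lt_trans hx x.1.isLt
    refine ⟨((⟨x.2, hx2⟩ : Fin n), x.1), ?_, ?_⟩
    · simp only [Finset.mem_filter, Finset.mem_univ, true_and]
      exact hx
    · rfl
  · intro p hp; rfl



end Stmt17

/-- Principal specialization of the Schur polynomial of the complement
conjugate diagram `λ̄'_j = n - λ'_{k+1-j}`. -/
theorem stmt17 (n k : ℕ) (hn : 1 ≤ n) (hk : 1 ≤ k) (q : ℝ) (hq0 : 0 < q) (hq1 : q < 1)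
    (lam : Fin n → ℕ) (hmono : Antitone lam) (hle : ∀ i, lam i ≤ k)
    (a : Fin n → ℕ) (ha : ∀ i, a i = lam i + (n - 1 - (i : ℕ))) :
    schur k (fun j => n - conj n k lam (Fin.rev j)) (fun j => q ^ (j : ℕ)) =
      q ^ (∑ i : Fin n, (k - lam i).choose 2) *
        (∏ p ∈ Finset.univ.filter (fun p : Fin n × Fin n => p.1 < p.2),
          qnum q (a p.1 - a p.2)) *
        ∏ l : Fin n, (qfact q (n + k - 1 - (l : ℕ)) /
          (qfact q (a l) * qfact q (n + k - 1 - a l))) := by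
  classical
  open Finset Stmt17 in
  set N := n + k with hN
  set c : ℕ → ℕ := fun m => (univ.filter (fun i : Fin n => m < lam i)).card with hc
  have hcn : ∀ m, c m ≤ n := by
    intro m
    simpa using Finset.card_le_card (Finset.filter_subset _ (univ : Finset (Fin n)))
  set e : ℕ → ℕ := fun m => n + m - c m with he
  set A : Finset ℕ := image a univ with hA
  set B : Finset ℕ := image e (range k) with hB
  have hAanti : ∀ i j : Fin n, i < j → a j < a i := by
    intro i j hij
    have h1 : lam j ≤ lam i := hmono hij.le
    have h2 : (i : ℕ) < (j : ℕ) := hij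
    have h3 := j.isLt
    rw [ha i, ha j]; omega
  have hcanti : ∀ m m', m ≤ m' → c m' ≤ c m := by
    intro m m' h
    apply Finset.card_le_card
    intro i hi
    simp only [Finset.mem_filter, Finset.mem_univ, true_and] at *
    omega
  have hemono : ∀ m m', m < m' → e m < e m' := by
    intro m m' h
    have h1 := hcanti m m' h.le
    have h2 := hcn m
    simp only [he]; omega
  have hclow : ∀ (i : Fin n) (m : ℕ), lam i ≤ m → c m ≤ (i : ℕ) := by
    intro i m h
    have hsub : (univ.filter (fun i' : Fin n => m < lam i')) ⊆
        (univ.filter (fun i' : Fin n => (i' : ℕ) < (i : ℕ))) := by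
      intro i' hi'
      simp only [Finset.mem_filter, Finset.mem_univ, true_and] at *
      by_contra hcon
      push_neg at hcon
      have : lam i' ≤ lam i := hmono (by exact hcon)
      omega
    have hcm : c m = (univ.filter (fun i' : Fin n => m < lam i')).card := by rw [hc]
    have h1 := Finset.card_le_card hsub
    have h2 : (univ.filter (fun i' : Fin n => (i' : ℕ) < (i : ℕ))).card ≤ (i : ℕ) := by
      have h3 := Finset.card_le_card_of_injOn (fun i' : Fin n => (i' : ℕ))
        (s := univ.filter (fun i' : Fin n => (i' : ℕ) < (i : ℕ))) (t := range (i : ℕ))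
        (fun i' hi' => by
          simp only [Finset.mem_coe, Finset.mem_filter, Finset.mem_univ, true_and] at hi'
          simpa using hi')
        (fun x _ y _ hxy => Fin.ext hxy)
      rwa [Finset.card_range] at h3
    omega
  have hchigh : ∀ (i : Fin n) (m : ℕ), m < lam i → (i : ℕ) + 1 ≤ c m := by
    intro i m h
    have hi1 : (i : ℕ) ≤ n - 1 := by have := i.isLt; omega
    have h3 := Finset.card_le_card_of_injOn
      (fun t : ℕ => (⟨min t (n - 1), by omega⟩ : Fin n))
      (s := range ((i : ℕ) + 1)) (t := univ.filter (fun i' : Fin n => m < lam i'))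
      (fun t ht => by
        simp only [Finset.mem_coe, Finset.mem_range] at ht
        simp only [Finset.mem_coe, Finset.mem_filter, Finset.mem_univ, true_and]
        have hti : min t (n - 1) ≤ (i : ℕ) := by omega
        have hle2 : lam i ≤ lam ⟨min t (n - 1), by omega⟩ := hmono (by exact hti)
        omega)
      (fun x hx y hy hxy => by
        have hx' : x < (i : ℕ) + 1 := by simpa using hx
        have hy' : y < (i : ℕ) + 1 := by simpa using hy
        have := congrArg Fin.val hxy
        simp only at this
        omega)
    have hcm : c m = (univ.filter (fun i' : Fin n => m < lam i')).card := by rw [hc]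
    rw [Finset.card_range] at h3
    omega
  have hdisjain : ∀ (i : Fin n) (m : ℕ), m < k → a i ≠ e m := by
    intro i m hm
    have h3 := i.isLt
    rcases lt_or_ge m (lam i) with h | h
    · have h1 := hchigh i m h
      have h2 := hcn m
      rw [ha i]; simp only [he]; omega
    · have h1 := hclow i m h
      rw [ha i]; simp only [he]; omega
  have hainj : ∀ i j : Fin n, a i = a j → i = j := by
    intro i j hij
    rcases lt_trichotomy i j with h' | h' | h'
    · exact absurd hij (by have := hAanti i j h'; omega)
    · exact h'
    · exact absurd hij (by have := hAanti j i h'; omega)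
  have hcardA : A.card = n := by
    rw [hA, Finset.card_image_of_injOn (fun x _ y _ h => hainj x y h)]
    exact Finset.card_fin n
  have hcardB : B.card = k := by
    rw [hB, Finset.card_image_of_injOn (fun x hx y hy h => by
      have hx' : x < k := by simpa using hx
      have hy' : y < k := by simpa using hy
      rcases lt_trichotomy x y with h' | h' | h'
      · exact absurd h (by have := hemono x y h'; omega)
      · exact h'
      · exact absurd h (by have := hemono y x h'; omega))]
    exact Finset.card_range k
  have hsubA : A ⊆ range N := by
    intro x hx
    simp only [hA, Finset.mem_image, Finset.mem_univ, true_and] at hx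
    obtain ⟨i, rfl⟩ := hx
    have h1 := hle i
    have h2 := i.isLt
    simp only [Finset.mem_range, hN]
    rw [ha i]; omega
  have hsubB : B ⊆ range N := by
    intro x hx
    simp only [hB, Finset.mem_image, Finset.mem_range] at hx
    obtain ⟨m, hm, rfl⟩ := hx
    simp only [Finset.mem_range, hN, he]
    omega
  have hdAB : Disjoint A B := by
    rw [Finset.disjoint_left]
    intro x hxA hxB
    simp only [hA, Finset.mem_image, Finset.mem_univ, true_and] at hxA
    simp only [hB, Finset.mem_image, Finset.mem_range] at hxB
    obtain ⟨i, rfl⟩ := hxA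
    obtain ⟨m, hm, hme⟩ := hxB
    exact hdisjain i m hm hme.symm
  have hunion : A ∪ B = range N := by
    apply Finset.eq_of_subset_of_card_le (Finset.union_subset hsubA hsubB)
    rw [Finset.card_union_of_disjoint hdAB, hcardA, hcardB, Finset.card_range]
  have hcrev : ∀ j : Fin k, conj n k lam (Fin.rev j) = c (k - 1 - (j : ℕ)) := by
    intro j
    have hv : ((Fin.rev j) : ℕ) = k - 1 - (j : ℕ) := by rw [Fin.val_rev]; omega
    rw [hc]
    unfold conj
    rw [hv]
  set E : Fin k → ℕ := fun i => (n - conj n k lam (Fin.rev i)) + (k - 1 - (i : ℕ)) with hE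
  have hEe : ∀ i : Fin k, E i = e (k - 1 - (i : ℕ)) := by
    intro i
    have h1 := hcn (k - 1 - (i : ℕ))
    simp only [hE, he, hcrev i]
    omega
  have hEanti : ∀ i j : Fin k, i < j → E j < E i := by
    intro i j hij
    rw [hEe, hEe]
    apply hemono
    have h1 : (j : ℕ) < k := j.isLt
    have h2 : (i : ℕ) < (j : ℕ) := hij
    omega
  have hEimage : Finset.image E univ = B := by
    rw [hB]
    ext x
    simp only [Finset.mem_image, Finset.mem_univ, true_and, Finset.mem_range]
    constructor
    · rintro ⟨i, rfl⟩
      exact ⟨k - 1 - (i : ℕ), by have := i.isLt; omega, (hEe i).symm⟩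
    · rintro ⟨m, hm, rfl⟩
      refine ⟨⟨k - 1 - m, by omega⟩, ?_⟩
      rw [hEe]
      congr 1
      simp only [Fin.val_mk]
      omega
  set D : Fin k → ℕ := fun i => k - 1 - (i : ℕ) with hD
  have hDanti : ∀ i j : Fin k, i < j → D j < D i := by
    intro i j hij
    have h1 : (j : ℕ) < k := j.isLt
    have h2 : (i : ℕ) < (j : ℕ) := hij
    simp only [hD]; omega
  have hDimage : Finset.image D univ = range k := by
    ext x
    simp only [Finset.mem_image, Finset.mem_univ, true_and, Finset.mem_range, hD]
    constructor
    · rintro ⟨i, rfl⟩; omega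
    · intro hx
      refine ⟨⟨k - 1 - x, by omega⟩, ?_⟩
      simp only [Fin.val_mk]
      omega
  have hmat1 : (Matrix.of fun i j : Fin k =>
        ((fun j : Fin k => q ^ (j : ℕ)) j) ^
          ((fun j : Fin k => n - conj n k lam (Fin.rev j)) i + (k - 1 - (i : ℕ))))
      = Matrix.vandermonde (fun i : Fin k => q ^ E i) := by
    ext i j
    simp only [Matrix.of_apply, Matrix.vandermonde_apply]
    have h1 : n - conj n k lam (Fin.rev i) + (k - 1 - (i : ℕ)) = E i := by
      simp only [hE]
    rw [h1, ← pow_mul, ← pow_mul, Nat.mul_comm]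
  have hmat2 : (Matrix.of fun i j : Fin k =>
        ((fun j : Fin k => q ^ (j : ℕ)) j) ^ (k - 1 - (i : ℕ)))
      = Matrix.vandermonde (fun i : Fin k => q ^ D i) := by
    ext i j
    simp only [Matrix.of_apply, Matrix.vandermonde_apply, hD]
    rw [← pow_mul, ← pow_mul, Nat.mul_comm]
  have hschur : schur k (fun j => n - conj n k lam (Fin.rev j)) (fun j => q ^ (j : ℕ))
      = PP q B / PP q (range k) := by
    unfold schur
    rw [hmat1, hmat2, Matrix.det_vandermonde, Matrix.det_vandermonde]
    congr 1
    · calc (∏ i : Fin k, ∏ j ∈ Ioi i, (q ^ E j - q ^ E i))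
          = ∏ i : Fin k, ∏ j ∈ Ioi i, gg q (E j) (E i) := rfl
        _ = ∏ p ∈ univ.filter (fun p : Fin k × Fin k => p.1 < p.2), gg q (E p.2) (E p.1) :=
            prod_Ioi_eq_pairs _
        _ = PP q (Finset.image E univ) := pairs_image E hEanti (gg q)
        _ = PP q B := by rw [hEimage]
    · calc (∏ i : Fin k, ∏ j ∈ Ioi i, (q ^ D j - q ^ D i))
          = ∏ i : Fin k, ∏ j ∈ Ioi i, gg q (D j) (D i) := rfl
        _ = ∏ p ∈ univ.filter (fun p : Fin k × Fin k => p.1 < p.2), gg q (D p.2) (D p.1) :=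
            prod_Ioi_eq_pairs _
        _ = PP q (Finset.image D univ) := pairs_image D hDanti (gg q)
        _ = PP q (range k) := by rw [hDimage]
  have hPN : PP q (range N) = PP q (range k) *
      ∏ l : Fin n, ∏ y ∈ range (N - 1 - (l : ℕ)), gg q y (N - 1 - (l : ℕ)) := by
    have h1 := PP_range_split q k n
    have h2 : ∏ l ∈ range n, ∏ y ∈ range (k + l), gg q y (k + l)
        = ∏ l ∈ range n, ∏ y ∈ range (N - 1 - l), gg q y (N - 1 - l) := by
      rw [← Finset.prod_range_reflect (fun l => ∏ y ∈ range (k + l), gg q y (k + l)) n]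
      refine Finset.prod_congr rfl fun l hl => ?_
      simp only [Finset.mem_range] at hl
      have h3 : k + (n - 1 - l) = N - 1 - l := by omega
      rw [h3]
    rw [hN, h1, h2,
      ← Fin.prod_univ_eq_prod_range (fun l => ∏ y ∈ range (N - 1 - l), gg q y (N - 1 - l)) n]
  have herase : ∀ x ∈ A, (range N).erase x = (A.erase x) ∪ B := by
    intro x hx
    have hxB : x ∉ B := Finset.disjoint_left.mp hdAB hx
    ext y
    constructor
    · intro hy
      rw [Finset.mem_erase, ← hunion, Finset.mem_union] at hy
      rcases hy.2 with h | h
      · exact Finset.mem_union_left _ (Finset.mem_erase.mpr ⟨hy.1, h⟩)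
      · exact Finset.mem_union_right _ h
    · intro hy
      rw [Finset.mem_union] at hy
      rw [Finset.mem_erase, ← hunion, Finset.mem_union]
      rcases hy with h | h
      · exact ⟨(Finset.mem_erase.mp h).1, Or.inl (Finset.mem_erase.mp h).2⟩
      · exact ⟨fun heq => hxB (heq ▸ h), Or.inr h⟩
  have hId1 : PP q (range N) * PP q A
      = PP q B * ∏ x ∈ A, ∏ y ∈ (range N).erase x, gg' q x y := by
    have hmix : ∏ x ∈ A, ∏ y ∈ (range N).erase x, gg' q x y
        = (PP q A) ^ 2 * ∏ x ∈ A, ∏ y ∈ B, gg' q x y := by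
      rw [← erase_sq q A, ← Finset.prod_mul_distrib]
      refine Finset.prod_congr rfl fun x hx => ?_
      rw [herase x hx,
        Finset.prod_union (Finset.disjoint_of_subset_left (Finset.erase_subset _ _) hdAB)]
    rw [hmix, ← hunion, PP_union q A B hdAB]
    ring
  have hNumA : ∏ x ∈ A, ∏ y ∈ (range N).erase x, gg' q x y
      = ∏ l : Fin n, ∏ y ∈ (range N).erase (a l), gg' q (a l) y := by
    rw [hA, Finset.prod_image (fun x _ y _ h => hainj x y h)]
  have h1q : (0:ℝ) < 1 - q := by linarith
  have hggpos : ∀ x y : ℕ, x < y → 0 < gg q x y := by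
    intro x y hxy
    have := pow_lt_pow_right_of_lt_one₀ hq0 hq1 hxy
    unfold gg; linarith
  have hgg'pos : ∀ x y : ℕ, x ≠ y → 0 < gg' q x y := by
    intro x y hxy
    unfold gg'
    rcases lt_trichotomy x y with h | h | h
    · rw [if_pos h]; exact hggpos _ _ h
    · exact absurd h hxy
    · rw [if_neg (by omega)]; exact hggpos _ _ h
  have hPPpos : ∀ S : Finset ℕ, 0 < PP q S := by
    intro S
    unfold PP
    apply Finset.prod_pos
    intro p hp
    simp only [Finset.mem_filter] at hp
    exact hggpos _ _ hp.2
  have hqfact_pos : ∀ m : ℕ, 0 < qfact q m := by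
    intro m
    unfold qfact
    apply Finset.prod_pos
    intro j hj
    unfold qnum
    apply div_pos _ h1q
    have : q ^ (j+1) < 1 := pow_lt_one₀ (le_of_lt hq0) hq1 (by omega)
    linarith
  have hNumpos : ∀ l : Fin n, 0 < ∏ y ∈ (range N).erase (a l), gg' q (a l) y := by
    intro l
    apply Finset.prod_pos
    intro y hy
    have hy' := Finset.mem_erase.mp hy
    exact hgg'pos _ _ (Ne.symm hy'.1)
  have hNP : (0:ℝ) < ∏ l : Fin n, ∏ y ∈ (range N).erase (a l), gg' q (a l) y :=
    Finset.prod_pos (fun l _ => hNumpos l)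
  have hkey : schur k (fun j => n - conj n k lam (Fin.rev j)) (fun j => q ^ (j : ℕ))
      = (∏ l : Fin n, ∏ y ∈ range (N - 1 - (l:ℕ)), gg q y (N - 1 - (l:ℕ))) * PP q A
        / ∏ l : Fin n, ∏ y ∈ (range N).erase (a l), gg' q (a l) y := by
    rw [hschur]
    rw [hNumA] at hId1
    rw [hPN] at hId1
    have hks := hPPpos (range k)
    rw [div_eq_div_iff (ne_of_gt hks) (ne_of_gt hNP)]
    linear_combination -hId1
  have halN : ∀ l : Fin n, a l < N := by
    intro l
    have h1 := hle l
    have h2 := l.isLt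
    rw [ha l]; omega
  have hNumEval : ∀ l : Fin n, ∏ y ∈ (range N).erase (a l), gg' q (a l) y
      = q ^ ((∑ j ∈ range (a l), j) + (a l) * (N - 1 - a l)) * (1-q) ^ (N-1) *
        (qfact q (a l) * qfact q (N - 1 - a l)) :=
    fun l => num_eval q hq1 N (a l) (halN l)
  have hColProd : (∏ l : Fin n, ∏ y ∈ range (N - 1 - (l:ℕ)), gg q y (N - 1 - (l:ℕ)))
      = q ^ (∑ l : Fin n, ∑ j ∈ range (N - 1 - (l:ℕ)), j)
        * (1-q) ^ (∑ l : Fin n, (N - 1 - (l:ℕ)))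
        * ∏ l : Fin n, qfact q (N - 1 - (l:ℕ)) := by
    calc (∏ l : Fin n, ∏ y ∈ range (N - 1 - (l:ℕ)), gg q y (N - 1 - (l:ℕ)))
        = ∏ l : Fin n, (q ^ (∑ j ∈ range (N - 1 - (l:ℕ)), j) * (1-q) ^ (N - 1 - (l:ℕ))
            * qfact q (N - 1 - (l:ℕ))) :=
          Finset.prod_congr rfl (fun l _ => col_eval q hq1 (N - 1 - (l:ℕ)))
      _ = _ := by
          rw [Finset.prod_mul_distrib, Finset.prod_mul_distrib,
            Finset.prod_pow_eq_pow_sum, Finset.prod_pow_eq_pow_sum]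
  have hNumProd : (∏ l : Fin n, ∏ y ∈ (range N).erase (a l), gg' q (a l) y)
      = q ^ (∑ l : Fin n, ((∑ j ∈ range (a l), j) + (a l) * (N - 1 - a l)))
        * (1-q) ^ (n * (N-1))
        * ((∏ l : Fin n, qfact q (a l)) * ∏ l : Fin n, qfact q (N - 1 - a l)) := by
    rw [Finset.prod_congr rfl (fun l _ => hNumEval l),
      Finset.prod_mul_distrib, Finset.prod_mul_distrib, Finset.prod_mul_distrib,
      Finset.prod_pow_eq_pow_sum, Finset.prod_const, Finset.card_univ, Fintype.card_fin,
      ← pow_mul, Nat.mul_comm (N-1) n]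
  have hPAeval : PP q A
      = q ^ (∑ l : Fin n, (l:ℕ) * a l) * (1-q) ^ (∑ l : Fin n, (l:ℕ)) *
        ∏ p ∈ univ.filter (fun p : Fin n × Fin n => p.1 < p.2), qnum q (a p.1 - a p.2) := by
    have h0 : PP q A
        = ∏ p ∈ univ.filter (fun p : Fin n × Fin n => p.1 < p.2), gg q (a p.2) (a p.1) := by
      rw [hA]
      exact (pairs_image a hAanti (gg q)).symm
    have h1 : ∀ p ∈ univ.filter (fun p : Fin n × Fin n => p.1 < p.2),
        gg q (a p.2) (a p.1) = q ^ (a p.2) * ((1-q) * qnum q (a p.1 - a p.2)) := by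
      intro p hp
      simp only [Finset.mem_filter, Finset.mem_univ, true_and] at hp
      have hlt := hAanti p.1 p.2 hp
      unfold gg qnum
      rw [mul_div_cancel₀ _ (ne_of_gt h1q)]
      have hd : a p.1 = a p.2 + (a p.1 - a p.2) := by omega
      rw [mul_sub, mul_one, ← pow_add, ← hd]
    have hcard : (univ.filter (fun p : Fin n × Fin n => p.1 < p.2)).card
        = ∑ l : Fin n, (l:ℕ) := by
      have h2 := sum_pairs_snd (fun _ : Fin n => 1)
      simp only [mul_one] at h2
      rw [Finset.card_eq_sum_ones, h2]
    rw [h0, Finset.prod_congr rfl h1, Finset.prod_mul_distrib, Finset.prod_mul_distrib,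
      Finset.prod_pow_eq_pow_sum, sum_pairs_snd a, Finset.prod_const, hcard]
    ring
  have hX : (∑ l : Fin n, (l:ℕ) * a l) + (∑ l : Fin n, ∑ j ∈ range (N - 1 - (l:ℕ)), j)
      = (∑ i : Fin n, (k - lam i).choose 2)
        + ∑ l : Fin n, ((∑ j ∈ range (a l), j) + (a l) * (N - 1 - a l)) := by
    rw [← Finset.sum_add_distrib, ← Finset.sum_add_distrib]
    refine Finset.sum_congr rfl fun l _ => ?_
    have hlk := hle l
    have hli := l.isLt
    have hal := ha l
    have hab : N - 1 - (l:ℕ) = a l + (k - lam l) := by omega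
    have hba : N - 1 - a l = (k - lam l) + (l:ℕ) := by omega
    rw [hab, hba, sum_range_id_add, choose_two, Nat.mul_add]
    ring
  have hY : (∑ l : Fin n, (l:ℕ)) + (∑ l : Fin n, (N - 1 - (l:ℕ))) = n * (N-1) := by
    rw [← Finset.sum_add_distrib]
    have h3 : ∀ l : Fin n, (l:ℕ) + (N - 1 - (l:ℕ)) = N - 1 := by
      intro l
      have := l.isLt
      omega
    rw [Finset.sum_congr rfl (fun l _ => h3 l), Finset.sum_const, Finset.card_univ,
      Fintype.card_fin, smul_eq_mul]
  -- final assembly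
  rw [hkey, hColProd, hNumProd, hPAeval]
  have hqT : ∀ m : ℕ, (q:ℝ) ^ m ≠ 0 := fun m => pow_ne_zero m (ne_of_gt hq0)
  have h1qT : ∀ m : ℕ, ((1:ℝ) - q) ^ m ≠ 0 := fun m => pow_ne_zero m (ne_of_gt h1q)
  have hQF2 : (∏ l : Fin n, qfact q (a l)) ≠ 0 :=
    ne_of_gt (Finset.prod_pos (fun l _ => hqfact_pos _))
  have hQF3 : (∏ l : Fin n, qfact q (N - 1 - a l)) ≠ 0 :=
    ne_of_gt (Finset.prod_pos (fun l _ => hqfact_pos _))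
  rw [Finset.prod_div_distrib, Finset.prod_mul_distrib]
  set S3 := ∑ l : Fin n, ((∑ j ∈ range (a l), j) + (a l) * (N - 1 - a l)) with hS3
  have e1 : q ^ (∑ l : Fin n, (l:ℕ) * a l) * q ^ (∑ l : Fin n, ∑ j ∈ range (N - 1 - (l:ℕ)), j)
      = q ^ (∑ i : Fin n, (k - lam i).choose 2) * q ^ S3 := by
    rw [← pow_add, ← pow_add, hX]
  have e2 : (1-q) ^ (∑ l : Fin n, (l:ℕ)) * (1-q) ^ (∑ l : Fin n, (N - 1 - (l:ℕ)))
      = (1-q) ^ (n * (N-1)) := by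
    rw [← pow_add, hY]
  have hRHS : q ^ (∑ i : Fin n, (k - lam i).choose 2) *
        (∏ p ∈ univ.filter (fun p : Fin n × Fin n => p.1 < p.2), qnum q (a p.1 - a p.2)) *
        ((∏ l : Fin n, qfact q (N - 1 - (l:ℕ))) /
          ((∏ l : Fin n, qfact q (a l)) * ∏ l : Fin n, qfact q (N - 1 - a l)))
      = (q ^ (∑ i : Fin n, (k - lam i).choose 2) *
          (∏ p ∈ univ.filter (fun p : Fin n × Fin n => p.1 < p.2), qnum q (a p.1 - a p.2)) *
          (∏ l : Fin n, qfact q (N - 1 - (l:ℕ)))) /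
        ((∏ l : Fin n, qfact q (a l)) * ∏ l : Fin n, qfact q (N - 1 - a l)) := by
    ring
  rw [hRHS, div_eq_div_iff
    (mul_ne_zero (mul_ne_zero (hqT S3) (h1qT (n * (N-1)))) (mul_ne_zero hQF2 hQF3))
    (mul_ne_zero hQF2 hQF3)]
  linear_combination
    (((∏ l : Fin n, qfact q (N - 1 - (l:ℕ))) *
      (∏ p ∈ univ.filter (fun p : Fin n × Fin n => p.1 < p.2), qnum q (a p.1 - a p.2)) *
      (∏ l : Fin n, qfact q (a l)) * (∏ l : Fin n, qfact q (N - 1 - a l)) *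
      ((1-q) ^ (∑ l : Fin n, (N - 1 - (l:ℕ))) * (1-q) ^ (∑ l : Fin n, (l:ℕ)))) * e1) +
    (((∏ l : Fin n, qfact q (N - 1 - (l:ℕ))) *
      (∏ p ∈ univ.filter (fun p : Fin n × Fin n => p.1 < p.2), qnum q (a p.1 - a p.2)) *
      (∏ l : Fin n, qfact q (a l)) * (∏ l : Fin n, qfact q (N - 1 - a l)) *
      (q ^ (∑ i : Fin n, (k - lam i).choose 2) * q ^ S3)) * e2)
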